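/- Let k ≥ 2 be an integer and let G be a simple graph containing a vertex set X with binding number bind(X) = 1/k. Then G has a matching of size at least |X|/(k+1). -/

import Mathlib

/-- The neighborhood of a vertex set: all vertices having a neighbor in `S`. -/
def SimpleGraph.nbhd {V : Type*} (G : SimpleGraph V) (S : Set V) : Set V :=
  {v | ∃ s ∈ S, G.Adj s v}

open Finset

section Abstract

variable {V : Type*} [DecidableEq V]

/-- Induction step helper: given a suitable new source `w` and a reduced set `X'`,
extend a good source set for `X'` by `w`. -/
private lemma step_lemma (k : ℕ) (ψ : V → V) (X X' : Finset V) (w : V)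
    (hX'X : X' ⊆ X) (hw : w ∈ X) (hwX' : w ∉ X')
    (h1 : ∀ s ∈ X', ψ s ≠ w)
    (h2 : ∀ s ∈ X', ψ s ≠ ψ w)
    (h3 : ψ w ∉ X')
    (hcard : X.card ≤ X'.card + (k + 1))
    (S' : Finset V) (hS'sub : S' ⊆ X')
    (hS'disj : ∀ s ∈ S', ∀ t ∈ S', s ≠ t → s ≠ ψ t ∧ ψ s ≠ ψ t)
    (hS'card : X'.card ≤ (k + 1) * S'.card) :
    ∃ S : Finset V, S ⊆ X ∧
      (∀ s ∈ S, ∀ t ∈ S, s ≠ t → s ≠ ψ t ∧ ψ s ≠ ψ t) ∧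
      X.card ≤ (k + 1) * S.card := by
  have hwS' : w ∉ S' := fun h => hwX' (hS'sub h)
  refine ⟨insert w S', ?_, ?_, ?_⟩
  · intro x hx
    rcases mem_insert.mp hx with rfl | hx
    · exact hw
    · exact hX'X (hS'sub hx)
  · intro s hs t ht hst
    rcases mem_insert.mp hs with hsw | hs' <;> rcases mem_insert.mp ht with htw | ht'
    · exact absurd (hsw.trans htw.symm) hst
    · subst hsw
      exact ⟨fun h => h1 t (hS'sub ht') h.symm, fun h => h2 t (hS'sub ht') h.symm⟩
    · subst htw
      exact ⟨fun h => h3 (h ▸ hS'sub hs'), h2 s (hS'sub hs')⟩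
    · exact hS'disj s hs' t ht' hst
  · rw [card_insert_of_notMem hwS', Nat.mul_succ]
    omega

/-- Main abstract lemma: given `ψ` with no fixed points on `X` and all fibers of
size at most `k ≥ 2`, there is a set `S ⊆ X` of "sources" whose edges `{s, ψ s}`
are pairwise disjoint, with `|X| ≤ (k+1)|S|`. -/
private lemma exists_good_set (k : ℕ) (hk : 2 ≤ k) :
    ∀ (n : ℕ) (X : Finset V) (ψ : V → V), X.card ≤ n →
      (∀ x ∈ X, ψ x ≠ x) →
      (∀ v : V, (X.filter (fun x => ψ x = v)).card ≤ k) →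
      ∃ S : Finset V, S ⊆ X ∧
        (∀ s ∈ S, ∀ t ∈ S, s ≠ t → s ≠ ψ t ∧ ψ s ≠ ψ t) ∧
        X.card ≤ (k + 1) * S.card := by
  intro n
  induction n with
  | zero =>
    intro X ψ hX _ _
    refine ⟨∅, by simp, by simp, ?_⟩
    simp [Nat.le_zero.mp hX]
  | succ n ih =>
    intro X ψ hXn hirr hfib
    rcases X.eq_empty_or_nonempty with rfl | hXne
    · exact ⟨∅, by simp, by simp, by simp⟩
    by_cases hA : ∃ u ∈ X, ∀ x ∈ X, ψ x = u → x = ψ u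
    · -- Case A: `u ∈ X` is a leaf (all its in-arrows come from `ψ u`).
      obtain ⟨u, huX, hu⟩ := hA
      set a := ψ u with ha
      set R : Finset V := insert a (X.filter (fun x => ψ x = a)) with hR
      set X' := X \ R with hX'
      have hX'X : X' ⊆ X := sdiff_subset
      have huR : u ∈ R := by
        rw [hR]
        exact mem_insert.mpr (Or.inr (mem_filter.mpr ⟨huX, rfl⟩))
      have hwX' : u ∉ X' := by
        rw [hX']
        simp [huR]
      have hX'lt : X'.card < X.card := card_lt_card ⟨hX'X, fun h => hwX' (h huX)⟩
      have hRcard : R.card ≤ k + 1 := by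
        have h1 : R.card ≤ (X.filter (fun x => ψ x = a)).card + 1 := by
          rw [hR]; exact card_insert_le _ _
        have := hfib a
        omega
      have hcard : X.card ≤ X'.card + (k + 1) := by
        have := card_le_card_sdiff_add_card (s := X) (t := R)
        rw [← hX'] at this
        omega
      obtain ⟨S', hS'sub, hS'disj, hS'card⟩ :=
        ih X' ψ (by omega) (fun x hx => hirr x (hX'X hx))
          (fun v => le_trans (card_le_card (filter_subset_filter _ hX'X)) (hfib v))
      refine step_lemma k ψ X X' u hX'X huX hwX' ?_ ?_ ?_ hcard S' hS'sub hS'disj hS'card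
      · intro s hs h
        have : s = a := hu s (hX'X hs) h
        rw [hX'] at hs
        exact (mem_sdiff.mp hs).2 (this ▸ mem_insert_self a _)
      · intro s hs h
        rw [hX'] at hs
        exact (mem_sdiff.mp hs).2
          (mem_insert.mpr (Or.inr (mem_filter.mpr ⟨(mem_sdiff.mp hs).1, h⟩)))
      · intro h
        rw [hX'] at h
        exact (mem_sdiff.mp h).2 (mem_insert_self a _)
    · by_cases hB : ∃ x₀ ∈ X, ψ x₀ ∉ X ∧ ∀ x ∈ X, ψ x = ψ x₀ → x = x₀
      · -- Case B: `ψ x₀ ∉ X` is a leaf with unique in-arrow from `x₀`.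
        obtain ⟨x₀, hx₀X, hux, hx₀⟩ := hB
        set R : Finset V := insert x₀ (X.filter (fun x => ψ x = x₀)) with hR
        set X' := X \ R with hX'
        have hX'X : X' ⊆ X := sdiff_subset
        have hx₀R : x₀ ∈ R := mem_insert_self _ _
        have hwX' : x₀ ∉ X' := by rw [hX']; simp [hx₀R]
        have hX'lt : X'.card < X.card := card_lt_card ⟨hX'X, fun h => hwX' (h hx₀X)⟩
        have hRcard : R.card ≤ k + 1 := by
          have h1 : R.card ≤ (X.filter (fun x => ψ x = x₀)).card + 1 := by
            rw [hR]; exact card_insert_le _ _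
          have := hfib x₀
          omega
        have hcard : X.card ≤ X'.card + (k + 1) := by
          have := card_le_card_sdiff_add_card (s := X) (t := R)
          rw [← hX'] at this
          omega
        obtain ⟨S', hS'sub, hS'disj, hS'card⟩ :=
          ih X' ψ (by omega) (fun x hx => hirr x (hX'X hx))
            (fun v => le_trans (card_le_card (filter_subset_filter _ hX'X)) (hfib v))
        refine step_lemma k ψ X X' x₀ hX'X hx₀X hwX' ?_ ?_ ?_ hcard S' hS'sub hS'disj hS'card
        · intro s hs h
          rw [hX'] at hs
          exact (mem_sdiff.mp hs).2
            (mem_insert.mpr (Or.inr (mem_filter.mpr ⟨(mem_sdiff.mp hs).1, h⟩)))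
        · intro s hs h
          have : s = x₀ := hx₀ s (hX'X hs) h
          exact hwX' (this ▸ hs)
        · intro h
          exact hux (hX'X h)
      · -- Case C: no leaves at all; then `ψ` is a fixed-point-free, 2-cycle-free
        -- permutation of `X`.
        push_neg at hA hB
        have hA' : ∀ u ∈ X, ∃ x ∈ X, ψ x = u ∧ x ≠ ψ u := by
          intro u hu
          obtain ⟨x, hx, hψ, hne⟩ := hA u hu
          exact ⟨x, hx, hψ, hne⟩
        have hB' : ∀ x₀ ∈ X, ψ x₀ ∉ X → ∃ x ∈ X, ψ x = ψ x₀ ∧ x ≠ x₀ := by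
          intro x₀ h h'
          obtain ⟨x, hx, hψ, hne⟩ := hB x₀ h h'
          exact ⟨x, hx, hψ, hne⟩
        have hXsub : X ⊆ X.image ψ := by
          intro u hu
          obtain ⟨x, hx, hψ, _⟩ := hA' u hu
          exact mem_image.mpr ⟨x, hx, hψ⟩
        have hsum : X.card = ∑ v ∈ X.image ψ, (X.filter fun x => ψ x = v).card :=
          card_eq_sum_card_fiberwise (fun x hx => mem_image_of_mem ψ hx)
        have hge1 : ∀ v ∈ X.image ψ, 1 ≤ (X.filter fun x => ψ x = v).card := by
          intro v hv
          obtain ⟨x, hx, hψ⟩ := mem_image.mp hv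
          exact card_pos.mpr ⟨x, mem_filter.mpr ⟨hx, hψ⟩⟩
        have key : ∀ v₀ ∈ X.image ψ, (X.filter fun x => ψ x = v₀).card ≤ 1 := by
          intro v₀ hv₀
          by_contra h2
          push_neg at h2
          have hlt : (X.image ψ).card < ∑ v ∈ X.image ψ, (X.filter fun x => ψ x = v).card := by
            calc (X.image ψ).card = ∑ _v ∈ X.image ψ, 1 := by simp
            _ < _ := Finset.sum_lt_sum hge1 ⟨v₀, hv₀, h2⟩
          have hle := card_le_card hXsub
          omega
        have himgX : X.image ψ = X := by
          refine Subset.antisymm ?_ hXsub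
          intro v hv
          by_contra hvX
          obtain ⟨x₀, hx₀, hψ₀⟩ := mem_image.mp hv
          obtain ⟨x, hx, hψ, hne⟩ := hB' x₀ hx₀ (hψ₀.symm ▸ hvX)
          have h2 : 1 < (X.filter fun z => ψ z = v).card := by
            refine Finset.one_lt_card.mpr ⟨x, ?_, x₀, ?_, hne⟩
            · exact mem_filter.mpr ⟨hx, by rw [hψ, hψ₀]⟩
            · exact mem_filter.mpr ⟨hx₀, hψ₀⟩
          exact absurd (key v hv) (by omega)
        have fiber_eq : ∀ v ∈ X, ∀ x ∈ X, ψ x = v →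
            X.filter (fun z => ψ z = v) = {x} := by
          intro v hv x hx hψ
          have h1 : (X.filter fun z => ψ z = v).card = 1 := by
            have := key v (himgX.symm ▸ hv)
            have := hge1 v (himgX.symm ▸ hv)
            omega
          obtain ⟨y, hy⟩ := card_eq_one.mp h1
          have hxy : x ∈ ({y} : Finset V) := hy ▸ mem_filter.mpr ⟨hx, hψ⟩
          rw [mem_singleton] at hxy
          rw [hy, hxy]
        obtain ⟨u, huX⟩ := hXne
        have haX : ψ u ∈ X := himgX ▸ mem_image_of_mem ψ huX
        have hbX : ψ (ψ u) ∈ X := himgX ▸ mem_image_of_mem ψ haX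
        set a := ψ u with ha
        set b := ψ a with hb
        have hfa : X.filter (fun z => ψ z = a) = {u} := fiber_eq a haX u huX rfl
        have hfb : X.filter (fun z => ψ z = b) = {a} := fiber_eq b hbX a haX rfl
        have hbu : b ≠ u := by
          intro h
          obtain ⟨x, hx, hψx, hxa⟩ := hA' u huX
          have hfu : X.filter (fun z => ψ z = u) = {x} := fiber_eq u huX x hx hψx
          have haf : a ∈ X.filter (fun z => ψ z = u) := mem_filter.mpr ⟨haX, h⟩
          rw [hfu, mem_singleton] at haf
          exact hxa (by rw [← haf, ha])
        have hau : a ≠ u := fun h => hirr u huX (by rw [← ha]; exact h)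
        have hab : a ≠ b := fun h => hirr a haX (by rw [← hb]; exact h.symm)
        set R : Finset V := {u, a, b} with hR
        set X' := X \ R with hX'
        have hX'X : X' ⊆ X := sdiff_subset
        have haR : a ∈ R := by simp [hR]
        have hwX' : a ∉ X' := by rw [hX']; simp [haR]
        have hX'lt : X'.card < X.card := card_lt_card ⟨hX'X, fun h => hwX' (h haX)⟩
        have hRcard : R.card ≤ k + 1 := by
          have : R.card ≤ 3 := by
            rw [hR]
            exact le_trans (card_insert_le _ _)
              (by simpa using Nat.add_le_add_right (card_insert_le a {b}) 1)
          omega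
        have hcard : X.card ≤ X'.card + (k + 1) := by
          have := card_le_card_sdiff_add_card (s := X) (t := R)
          rw [← hX'] at this
          omega
        obtain ⟨S', hS'sub, hS'disj, hS'card⟩ :=
          ih X' ψ (by omega) (fun x hx => hirr x (hX'X hx))
            (fun v => le_trans (card_le_card (filter_subset_filter _ hX'X)) (hfib v))
        refine step_lemma k ψ X X' a hX'X haX hwX' ?_ ?_ ?_ hcard S' hS'sub hS'disj hS'card
        · intro s hs h
          have hsu : s ∈ X.filter (fun z => ψ z = a) :=
            mem_filter.mpr ⟨hX'X hs, h⟩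
          rw [hfa, mem_singleton] at hsu
          rw [hX'] at hs
          exact (mem_sdiff.mp hs).2 (by rw [hsu, hR]; exact mem_insert_self _ _)
        · intro s hs h
          rw [← hb] at h
          have hsa : s ∈ X.filter (fun z => ψ z = b) :=
            mem_filter.mpr ⟨hX'X hs, h⟩
          rw [hfb, mem_singleton] at hsa
          rw [hX'] at hs
          exact (mem_sdiff.mp hs).2 (by rw [hsa, hR]; simp)
        · intro h
          rw [← hb, hX'] at h
          exact (mem_sdiff.mp h).2 (by rw [hR]; simp)

end Abstract

section Hall

/-- Hall's theorem with multiplicity `k`: produce `ψ` sending each `x ∈ X` to a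
neighbor, with every fiber of size at most `k`. -/
private lemma exists_psi {V : Type*} [Fintype V] [DecidableEq V] (G : SimpleGraph V)
    [DecidableRel G.Adj] (k : ℕ) (hk : 1 ≤ k) (X : Finset V)
    (hbind : ∀ s ⊆ X, s.card ≤
      k * (s.biUnion (fun x => Finset.univ.filter (fun v => G.Adj x v))).card) :
    ∃ ψ : V → V, (∀ x ∈ X, G.Adj x (ψ x)) ∧
      ∀ v : V, (X.filter (fun x => ψ x = v)).card ≤ k := by
  classical
  set nbr : V → Finset V := fun x => Finset.univ.filter (fun v => G.Adj x v) with hnbr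
  have hHall : ∀ s : Finset {x // x ∈ X},
      s.card ≤ (s.biUnion (fun x => (nbr ↑x) ×ˢ (Finset.univ : Finset (Fin k)))).card := by
    intro s
    have hbi : s.biUnion (fun x => (nbr ↑x) ×ˢ (Finset.univ : Finset (Fin k)))
        = ((s.image Subtype.val).biUnion nbr) ×ˢ (Finset.univ : Finset (Fin k)) := by
      ext p
      simp only [mem_biUnion, mem_product, mem_image, mem_univ, and_true]
      constructor
      · rintro ⟨x, hx, hv⟩
        exact ⟨↑x, ⟨x, hx, rfl⟩, hv⟩
      · rintro ⟨y, ⟨x, hx, rfl⟩, hv⟩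
        exact ⟨x, hx, hv⟩
    rw [hbi, card_product]
    have hsub : s.image Subtype.val ⊆ X := by
      intro x hx
      obtain ⟨y, -, rfl⟩ := mem_image.mp hx
      exact y.2
    have hcard : s.card = (s.image Subtype.val).card :=
      (card_image_of_injective s Subtype.val_injective).symm
    calc s.card = (s.image Subtype.val).card := hcard
      _ ≤ k * ((s.image Subtype.val).biUnion nbr).card := hbind _ hsub
      _ = ((s.image Subtype.val).biUnion nbr).card * (Finset.univ : Finset (Fin k)).card := by
          rw [Finset.card_univ, Fintype.card_fin, Nat.mul_comm]
  obtain ⟨f, hfinj, hf⟩ := (Finset.all_card_le_biUnion_card_iff_exists_injective _).mp hHall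
  refine ⟨fun v => if h : v ∈ X then (f ⟨v, h⟩).1 else v, ?_, ?_⟩
  · intro x hx
    simp only [dif_pos hx]
    have := hf ⟨x, hx⟩
    rw [mem_product] at this
    have := this.1
    rw [hnbr] at this
    simpa using (mem_filter.mp this).2
  · intro v
    set ψ : V → V := fun v => if h : v ∈ X then (f ⟨v, h⟩).1 else v with hψ
    have : ∀ x ∈ X.filter (fun x => ψ x = v),
        (fun x => if h : x ∈ X then (f ⟨x, h⟩).2 else ⟨0, hk⟩) x ∈
          (Finset.univ : Finset (Fin k)) := fun _ _ => mem_univ _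
    refine le_trans (card_le_card_of_injOn _ this ?_) (by simp)
    intro x hx y hy hxy
    have hxX := (mem_filter.mp hx).1
    have hyX := (mem_filter.mp hy).1
    have hx1 : ψ x = v := (mem_filter.mp hx).2
    have hy1 : ψ y = v := (mem_filter.mp hy).2
    rw [hψ] at hx1 hy1
    simp only [dif_pos hxX] at hx1
    simp only [dif_pos hyX] at hy1
    simp only [dif_pos hxX, dif_pos hyX] at hxy
    have : f ⟨x, hxX⟩ = f ⟨y, hyX⟩ := Prod.ext (by rw [hx1, hy1]) hxy
    have := hfinj this
    exact congrArg Subtype.val this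

end Hall

/-- If `X` is a vertex set of a graph `G` with binding number `1/k` (`k ≥ 2`
an integer), i.e. `|N(S)| ≥ |S|/k` for all `S ⊆ X` with `N(S) ≠ V(G)`,
then `G` has a matching of size at least `|X|/(k+1)`. -/
theorem matching_of_binding {V : Type*} [Fintype V] (G : SimpleGraph V)
    (k : ℕ) (hk : 2 ≤ k) (X : Set V)
    (hbind : ∀ S ⊆ X, G.nbhd S ≠ Set.univ → S.ncard ≤ k * (G.nbhd S).ncard) :
    ∃ M : G.Subgraph, M.IsMatching ∧ X.ncard ≤ (k + 1) * M.edgeSet.ncard := by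
  classical
  set Xf : Finset V := (Set.toFinite X).toFinset with hXf
  have hXmem : ∀ x, x ∈ Xf ↔ x ∈ X := fun x => Set.Finite.mem_toFinset _
  have hXcard : X.ncard = Xf.card := Set.ncard_eq_toFinset_card X (Set.toFinite X)
  set nbr : V → Finset V := fun x => Finset.univ.filter (fun v => G.Adj x v) with hnbr
  have hbindF : ∀ s ⊆ Xf, s.card ≤ k * (s.biUnion nbr).card := by
    intro s hs
    have hcoe : (G.nbhd ↑s) = ↑(s.biUnion nbr) := by
      ext v
      simp only [SimpleGraph.nbhd, Set.mem_setOf_eq, coe_biUnion, Set.mem_iUnion,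
        mem_coe, hnbr, mem_filter, mem_univ, true_and]
      constructor
      · rintro ⟨x, hx, hadj⟩
        exact ⟨x, hx, hadj⟩
      · rintro ⟨x, hx, hadj⟩
        exact ⟨x, hx, hadj⟩
    by_cases hu : G.nbhd ↑s = Set.univ
    · have huniv : s.biUnion nbr = Finset.univ := by
        have : (↑(s.biUnion nbr) : Set V) = Set.univ := by rw [← hcoe, hu]
        exact Finset.coe_eq_univ.mp this
      rw [huniv]
      calc s.card ≤ (Finset.univ : Finset V).card := card_le_univ s
        _ ≤ k * (Finset.univ : Finset V).card := Nat.le_mul_of_pos_left _ (by omega)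
    · have h := hbind ↑s (fun x hx => (hXmem x).mp (hs hx)) hu
      rwa [Set.ncard_coe_finset, hcoe, Set.ncard_coe_finset] at h
  obtain ⟨ψ, hψadj, hψfib⟩ := exists_psi G k (by omega) Xf hbindF
  have hψirr : ∀ x ∈ Xf, ψ x ≠ x := by
    intro x hx h
    exact G.irrefl (h ▸ hψadj x hx)
  obtain ⟨S, hSsub, hSdisj, hScard⟩ :=
    exists_good_set k hk Xf.card Xf ψ le_rfl hψirr hψfib
  have hadj : ∀ s ∈ S, G.Adj s (ψ s) := fun s hs => hψadj s (hSsub hs)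
  have hne : ∀ s ∈ S, ψ s ≠ s := fun s hs => hψirr s (hSsub hs)
  have himg : ∀ s ∈ S, ψ s ∉ S := by
    intro s hs hmem
    exact (hSdisj (ψ s) hmem s hs (hne s hs)).1 rfl
  let M : G.Subgraph :=
    { verts := ↑S ∪ ψ '' ↑S
      Adj := fun u v => ∃ s ∈ S, (u = s ∧ v = ψ s) ∨ (u = ψ s ∧ v = s)
      adj_sub := by
        rintro u v ⟨s, hs, (⟨h1, h2⟩ | ⟨h1, h2⟩)⟩
        · rw [h1, h2]; exact hadj s hs
        · rw [h1, h2]; exact (hadj s hs).symm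
      edge_vert := by
        rintro u v ⟨s, hs, (⟨h1, h2⟩ | ⟨h1, h2⟩)⟩
        · exact Set.mem_union_left _ (by rw [h1]; exact hs)
        · exact Set.mem_union_right _ ⟨s, hs, h1.symm⟩
      symm := ⟨by
        rintro u v ⟨s, hs, (⟨h1, h2⟩ | ⟨h1, h2⟩)⟩
        · exact ⟨s, hs, Or.inr ⟨h2, h1⟩⟩
        · exact ⟨s, hs, Or.inl ⟨h2, h1⟩⟩⟩ }
  have hM : M.IsMatching := by
    intro v hv
    rw [Set.mem_union] at hv
    rcases hv with hvS | ⟨s₀, hs₀, rfl⟩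
    · have hvS' : v ∈ S := hvS
      refine ⟨ψ v, ⟨v, hvS', Or.inl ⟨rfl, rfl⟩⟩, ?_⟩
      rintro y ⟨s, hs, (⟨h1, h2⟩ | ⟨h1, h2⟩)⟩
      · rw [h2, ← h1]
      · exact absurd (h1 ▸ hvS') (himg s hs)
    · have hs₀' : s₀ ∈ S := hs₀
      refine ⟨s₀, ⟨s₀, hs₀', Or.inr ⟨rfl, rfl⟩⟩, ?_⟩
      rintro y ⟨s, hs, (⟨h1, h2⟩ | ⟨h1, h2⟩)⟩
      · exact absurd (h1.symm ▸ hs) (himg s₀ hs₀')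
      · by_cases hss : s = s₀
        · rw [h2, hss]
        · exact absurd h1.symm (hSdisj s hs s₀ hs₀' hss).2
  have hedge : M.edgeSet = (fun x => Sym2.mk x (ψ x)) '' ↑S := by
    ext e
    refine Sym2.inductionOn e ?_
    intro u v
    simp only [SimpleGraph.Subgraph.mem_edgeSet, Set.mem_image, mem_coe]
    constructor
    · rintro ⟨s, hs, (⟨h1, h2⟩ | ⟨h1, h2⟩)⟩
      · exact ⟨s, hs, by rw [h1, h2]⟩
      · exact ⟨s, hs, by rw [h1, h2]; exact Sym2.eq_swap⟩
    · rintro ⟨s, hs, heq⟩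
      rcases Sym2.eq_iff.mp heq with ⟨h1, h2⟩ | ⟨h1, h2⟩
      · exact ⟨s, hs, Or.inl ⟨h1.symm, h2.symm⟩⟩
      · exact ⟨s, hs, Or.inr ⟨h2.symm, h1.symm⟩⟩
  have hcount : M.edgeSet.ncard = S.card := by
    rw [hedge, Set.ncard_image_of_injOn, Set.ncard_coe_finset]
    intro s hs t ht heq
    simp only [mem_coe] at hs ht
    rcases Sym2.eq_iff.mp heq with ⟨h1, _⟩ | ⟨h1, _⟩
    · exact h1
    · by_contra hne'
      exact (hSdisj s hs t ht hne').1 h1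
  exact ⟨M, hM, by rw [hXcard, hcount]; exact hScard⟩
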